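/- Let a, s, t be rational numbers with s ≠ 0, t ≠ 0, and with each of the following nonzero: at⁴ − 2s⁴, 2a²t⁸ + 10as⁴t⁴ − s⁸, a²t⁸ + 14as⁴t⁴ − 5s⁸, at⁴ + s⁴, a³t¹² + 3a²t⁸s⁴ + 111as⁸t⁴ + s¹², and D := a⁶t²⁴ + 6a⁵t²⁰s⁴ − 255a⁴t¹⁶s⁸ − 790a³t¹²s¹² − 2253a²t⁸s¹⁶ − 264as²⁰t⁴ + s²⁴. Define x = 18as⁵t³(at⁴ − 2s⁴)²(2a²t⁸ + 10as⁴t⁴ − s⁸)²(a²t⁸ + 14as⁴t⁴ − 5s⁸) / ((at⁴ + s⁴)(a³t¹² + 3a²t⁸s⁴ + 111as⁸t⁴ + s¹²)·D), y = −(1/6)·(at⁴ + s⁴)²(a³t¹² + 3a²t⁸s⁴ + 111as⁸t⁴ + s¹²)²(a²t⁸ + 14as⁴t⁴ − 5s⁸) / (s³t(at⁴ − 2s⁴)(2a²t⁸ + 10as⁴t⁴ − s⁸)·D), and z = 2s·D / (t(a²t⁸ + 14as⁴t⁴ − 5s⁸)(at⁴ + s⁴)(a³t¹² + 3a²t⁸s⁴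 + 111as⁸t⁴ + s¹²)). Then xyz(x + y + z) = a. -/

import Mathlib

theorem stmt_4 (a s t : ℚ) (hs : s ≠ 0) (ht : t ≠ 0)
    (h1 : a * t ^ 4 - 2 * s ^ 4 ≠ 0)
    (h2 : 2 * a ^ 2 * t ^ 8 + 10 * a * s ^ 4 * t ^ 4 - s ^ 8 ≠ 0)
    (h3 : a ^ 2 * t ^ 8 + 14 * a * s ^ 4 * t ^ 4 - 5 * s ^ 8 ≠ 0)
    (h4 : a * t ^ 4 + s ^ 4 ≠ 0)
    (h5 : a ^ 3 * t ^ 12 + 3 * a ^ 2 * t ^ 8 * s ^ 4 + 111 * a * s ^ 8 * t ^ 4 + s ^ 12 ≠ 0)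
    (D : ℚ)
    (hD : D = a ^ 6 * t ^ 24 + 6 * a ^ 5 * t ^ 20 * s ^ 4 - 255 * a ^ 4 * t ^ 16 * s ^ 8 -
      790 * a ^ 3 * t ^ 12 * s ^ 12 - 2253 * a ^ 2 * t ^ 8 * s ^ 16 - 264 * a * s ^ 20 * t ^ 4 + s ^ 24)
    (h6 : D ≠ 0)
    (x y z : ℚ)
    (hx : x = 18 * a * s ^ 5 * t ^ 3 * (a * t ^ 4 - 2 * s ^ 4) ^ 2 *
      (2 * a ^ 2 * t ^ 8 + 10 * a * s ^ 4 * t ^ 4 - s ^ 8) ^ 2 *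
      (a ^ 2 * t ^ 8 + 14 * a * s ^ 4 * t ^ 4 - 5 * s ^ 8) /
      ((a * t ^ 4 + s ^ 4) *
        (a ^ 3 * t ^ 12 + 3 * a ^ 2 * t ^ 8 * s ^ 4 + 111 * a * s ^ 8 * t ^ 4 + s ^ 12) * D))
    (hy : y = -(1 / 6) * (a * t ^ 4 + s ^ 4) ^ 2 *
      (a ^ 3 * t ^ 12 + 3 * a ^ 2 * t ^ 8 * s ^ 4 + 111 * a * s ^ 8 * t ^ 4 + s ^ 12) ^ 2 *
      (a ^ 2 * t ^ 8 + 14 * a * s ^ 4 * t ^ 4 - 5 * s ^ 8) /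
      (s ^ 3 * t * (a * t ^ 4 - 2 * s ^ 4) *
        (2 * a ^ 2 * t ^ 8 + 10 * a * s ^ 4 * t ^ 4 - s ^ 8) * D))
    (hz : z = 2 * s * D /
      (t * (a ^ 2 * t ^ 8 + 14 * a * s ^ 4 * t ^ 4 - 5 * s ^ 8) * (a * t ^ 4 + s ^ 4) *
        (a ^ 3 * t ^ 12 + 3 * a ^ 2 * t ^ 8 * s ^ 4 + 111 * a * s ^ 8 * t ^ 4 + s ^ 12))) :
    x * y * z * (x + y + z) = a := by
  have dx : (a * t ^ 4 + s ^ 4) *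
        (a ^ 3 * t ^ 12 + 3 * a ^ 2 * t ^ 8 * s ^ 4 + 111 * a * s ^ 8 * t ^ 4 + s ^ 12) * D ≠ 0 := mul_ne_zero (mul_ne_zero h4 h5) h6
  have dy : s ^ 3 * t * (a * t ^ 4 - 2 * s ^ 4) *
        (2 * a ^ 2 * t ^ 8 + 10 * a * s ^ 4 * t ^ 4 - s ^ 8) * D ≠ 0 :=
    mul_ne_zero (mul_ne_zero (mul_ne_zero (mul_ne_zero (pow_ne_zero 3 hs) ht) h1) h2) h6
  have dz : t * (a ^ 2 * t ^ 8 + 14 * a * s ^ 4 * t ^ 4 - 5 * s ^ 8) * (a * t ^ 4 + s ^ 4) *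
        (a ^ 3 * t ^ 12 + 3 * a ^ 2 * t ^ 8 * s ^ 4 + 111 * a * s ^ 8 * t ^ 4 + s ^ 12) ≠ 0 := mul_ne_zero (mul_ne_zero (mul_ne_zero ht h3) h4) h5
  subst hx hy hz
  rw [div_add_div _ _ dx dy, div_add_div _ _ (mul_ne_zero dx dy) dz, div_mul_div_comm,
    div_mul_div_comm, div_mul_div_comm, div_eq_iff (mul_ne_zero (mul_ne_zero (mul_ne_zero dx dy) dz)
      (mul_ne_zero (mul_ne_zero dx dy) dz))]
  subst hD
  ring
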